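/- With the assumptions of the discounted operator setting (weighted shift $L$ on $X$ with $d = \sum_n (d_n)^{-\alpha} < \infty$, $A$ bounded $\alpha$-Hölder with Hölder constant $\mathrm{Lip}_{A,D_X^\alpha}$), the fixed points $u_s$ of $\mathcal{T}_{s,A}$ satisfy for all $s \in (0,1)$ and all $x, y \in X$: $|u_s(x) - u_s(y)| \leq d\,\mathrm{Lip}_{A,D_X^\alpha}\|x-y\|_X^\alpha$. Hence the family $(u_s)_{0<s<1}$ is equicontinuous. -/

import Mathlib

open MeasureTheory BoundedContinuousFunction Filter

/-- `beta α k n = α_k ⋯ α_{k+n-1}`. -/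
noncomputable def beta (α : ℕ → ℝ) (k n : ℕ) : ℝ := ∏ j ∈ Finset.range n, α (k + j)

/-- `d_n = inf_k β_k^n`. -/
noncomputable def dseq (α : ℕ → ℝ) (n : ℕ) : ℝ := ⨅ k, beta α k n

section aux

variable {c c' : ℝ} {α : ℕ → ℝ}

lemma beta_ge (hc : 0 < c) (hα : ∀ n, α n ∈ Set.Ioo c c') (k n : ℕ) :
    c ^ n ≤ beta α k n := by
  calc c ^ n = ∏ _j ∈ Finset.range n, c := by rw [Finset.prod_const, Finset.card_range]
  _ ≤ beta α k n := Finset.prod_le_prod (fun _ _ => hc.le) (fun j _ => (hα _).1.le)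

lemma dseq_pos (hc : 0 < c) (hα : ∀ n, α n ∈ Set.Ioo c c') (n : ℕ) : 0 < dseq α n :=
  lt_of_lt_of_le (pow_pos hc n) (le_ciInf fun k => beta_ge hc hα k n)

lemma dseq_le (hc : 0 < c) (hα : ∀ n, α n ∈ Set.Ioo c c') (k n : ℕ) :
    dseq α n ≤ beta α k n :=
  ciInf_le ⟨c ^ n, by rintro x ⟨k', rfl⟩; exact beta_ge hc hα k' n⟩ k

end aux

section main

variable {p : ENNReal} [Fact (1 ≤ p)] {α : ℕ → ℝ}
variable {ι : ℝ → lp (fun _ : ℕ => ℝ) p → lp (fun _ : ℕ => ℝ) p}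

lemma iter_apply
    (hι : ∀ (r : ℝ) (x : lp (fun _ : ℕ => ℝ) p) (n : ℕ),
      (ι r x : ∀ _ : ℕ, ℝ) n = if n = 0 then r else (x : ∀ _ : ℕ, ℝ) (n - 1) / α (n - 1))
    (n : ℕ) (z : lp (fun _ : ℕ => ℝ) p) (k : ℕ) :
    ((ι 0)^[n] z : ∀ _ : ℕ, ℝ) k =
      if k < n then 0 else (z : ∀ _ : ℕ, ℝ) (k - n) / beta α (k - n) n := by
  induction n generalizing k with
  | zero => simp [beta]
  | succ n ih =>
    rw [Function.iterate_succ_apply', hι]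
    rcases k with _ | k
    · simp
    · simp only [Nat.succ_ne_zero, if_false, Nat.add_sub_cancel]
      rw [ih]
      by_cases hk : k < n
      · rw [if_pos hk, if_pos (by omega), zero_div]
      · rw [if_neg hk, if_neg (by omega)]
        have hkk : k + 1 - (n + 1) = k - n := by omega
        rw [hkk, div_div]
        congr 1
        rw [beta, beta, Finset.prod_range_succ]
        congr 2
        omega

lemma iter_norm (hp : p ≠ ⊤) {c c' : ℝ} (hc : 0 < c) (hα : ∀ n, α n ∈ Set.Ioo c c')
    (hι : ∀ (r : ℝ) (x : lp (fun _ : ℕ => ℝ) p) (n : ℕ),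
      (ι r x : ∀ _ : ℕ, ℝ) n = if n = 0 then r else (x : ∀ _ : ℕ, ℝ) (n - 1) / α (n - 1))
    (n : ℕ) (z : lp (fun _ : ℕ => ℝ) p) :
    ‖(ι 0)^[n] z‖ ≤ (dseq α n)⁻¹ * ‖z‖ := by
  have h1p : (1 : ENNReal) ≤ p := Fact.out
  have hptr : 0 < p.toReal := ENNReal.toReal_pos (zero_lt_one.trans_le h1p).ne' hp
  set w := (ι 0)^[n] z with hw
  have hdpos := dseq_pos hc hα n
  have hM : 0 ≤ (dseq α n)⁻¹ := inv_nonneg.2 hdpos.le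
  have hcomp : ∀ k : ℕ, ‖(w : ∀ _ : ℕ, ℝ) (k + n)‖ ≤ (dseq α n)⁻¹ * ‖(z : ∀ _ : ℕ, ℝ) k‖ := by
    intro k
    rw [hw, iter_apply hι, if_neg (by omega), Nat.add_sub_cancel]
    rw [Real.norm_eq_abs, Real.norm_eq_abs, abs_div,
      abs_of_pos (lt_of_lt_of_le hdpos (dseq_le hc hα k n)), div_eq_inv_mul]
    exact mul_le_mul_of_nonneg_right
      (inv_anti₀ hdpos (dseq_le hc hα k n)) (abs_nonneg _)
  have hzsum : Summable (fun k : ℕ => ‖(z : ∀ _ : ℕ, ℝ) k‖ ^ p.toReal) :=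
    (lp.memℓp z).summable hptr
  have hzero : ∀ k : ℕ, k < n → ‖(w : ∀ _ : ℕ, ℝ) k‖ ^ p.toReal = 0 := by
    intro k hk
    rw [hw, iter_apply hι, if_pos hk, norm_zero, Real.zero_rpow hptr.ne']
  have hg : Function.Injective (fun j : ℕ => j + n) := add_left_injective n
  have hle : ∀ k : ℕ, ‖(w : ∀ _ : ℕ, ℝ) (k + n)‖ ^ p.toReal
      ≤ (dseq α n)⁻¹ ^ p.toReal * ‖(z : ∀ _ : ℕ, ℝ) k‖ ^ p.toReal := by
    intro k
    rw [← Real.mul_rpow hM (norm_nonneg _)]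
    exact Real.rpow_le_rpow (norm_nonneg _) (hcomp k) hptr.le
  have hws : Summable (fun k : ℕ => ‖(w : ∀ _ : ℕ, ℝ) (k + n)‖ ^ p.toReal) :=
    Summable.of_nonneg_of_le (fun k => Real.rpow_nonneg (norm_nonneg _) _) hle
      (hzsum.mul_left _)
  have hts : ∑' k : ℕ, ‖(w : ∀ _ : ℕ, ℝ) (k + n)‖ ^ p.toReal
      = ∑' k : ℕ, ‖(w : ∀ _ : ℕ, ℝ) k‖ ^ p.toReal := by
    refine Function.Injective.tsum_eq (f := fun k : ℕ => ‖(w : ∀ _ : ℕ, ℝ) k‖ ^ p.toReal) hg ?_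
    intro x hx
    rcases Nat.lt_or_ge x n with h | h
    · exact absurd (hzero x h) hx
    · exact ⟨x - n, by simp only; omega⟩
  have hkey : ‖w‖ ^ p.toReal ≤ ((dseq α n)⁻¹ * ‖z‖) ^ p.toReal := by
    rw [lp.norm_rpow_eq_tsum hptr, Real.mul_rpow hM (norm_nonneg z),
      lp.norm_rpow_eq_tsum hptr z]
    calc ∑' k : ℕ, ‖(w : ∀ _ : ℕ, ℝ) k‖ ^ p.toReal
        = ∑' k : ℕ, ‖(w : ∀ _ : ℕ, ℝ) (k + n)‖ ^ p.toReal := hts.symm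
      _ ≤ ∑' k : ℕ, (dseq α n)⁻¹ ^ p.toReal * ‖(z : ∀ _ : ℕ, ℝ) k‖ ^ p.toReal :=
          Summable.tsum_le_tsum hle hws (hzsum.mul_left _)
      _ = (dseq α n)⁻¹ ^ p.toReal * ∑' k : ℕ, ‖(z : ∀ _ : ℕ, ℝ) k‖ ^ p.toReal := tsum_mul_left
  exact (Real.rpow_le_rpow_iff (norm_nonneg _) (mul_nonneg hM (norm_nonneg _)) hptr).1 hkey

end main

lemma exp_int_le {m : Measure ℝ} (f g : ℝ → ℝ) (B ux uy : ℝ)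
    (hf : Real.exp ux = ∫ r, Real.exp (f r) ∂m)
    (hg : Real.exp uy = ∫ r, Real.exp (g r) ∂m)
    (hB : ∀ r, f r ≤ g r + B) : ux ≤ uy + B := by
  have hif : Integrable (fun r => Real.exp (f r)) m := by
    by_contra h
    rw [integral_undef h] at hf
    exact (Real.exp_pos ux).ne' hf
  have hig : Integrable (fun r => Real.exp (g r)) m := by
    by_contra h
    rw [integral_undef h] at hg
    exact (Real.exp_pos uy).ne' hg
  have h2 : Real.exp ux ≤ Real.exp (uy + B) := by
    rw [hf, Real.exp_add, hg, ← integral_mul_const]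
    refine integral_mono hif (hig.mul_const _) fun r => ?_
    rw [← Real.exp_add]
    exact Real.exp_le_exp.2 (hB r)
  exact Real.exp_le_exp.1 h2
theorem stmt15 (p : ENNReal) [Fact (1 ≤ p)] (hp : p ≠ ⊤)
    (c c' : ℝ) (hc : 0 < c) (hcc : c < c')
    (α : ℕ → ℝ) (hα : ∀ n, α n ∈ Set.Ioo c c')
    (a : ℝ) (ha0 : 0 < a) (ha1 : a ≤ 1)
    (hd : Summable fun n => (dseq α (n + 1))⁻¹ ^ a)
    (m : Measure ℝ) [IsProbabilityMeasure m]
    (A : lp (fun _ : ℕ => ℝ) p →ᵇ ℝ) (K : ℝ) (hK : 0 ≤ K)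
    (hA : ∀ x y : lp (fun _ : ℕ => ℝ) p, |A x - A y| ≤ K * ‖x - y‖ ^ a)
    (ι : ℝ → lp (fun _ : ℕ => ℝ) p → lp (fun _ : ℕ => ℝ) p)
    (hι : ∀ (r : ℝ) (x : lp (fun _ : ℕ => ℝ) p) (n : ℕ),
      (ι r x : ∀ _ : ℕ, ℝ) n = if n = 0 then r else (x : ∀ _ : ℕ, ℝ) (n - 1) / α (n - 1))
    (u : Set.Ioo (0 : ℝ) 1 → (lp (fun _ : ℕ => ℝ) p →ᵇ ℝ))
    (hfix : ∀ (s : Set.Ioo (0 : ℝ) 1) (x : lp (fun _ : ℕ => ℝ) p),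
      Real.exp (u s x) =
        ∫ r : ℝ, Real.exp (A (ι r x) + (s : ℝ) * u s (ι r x)) ∂m) :
    (∀ (s : Set.Ioo (0 : ℝ) 1) (x y : lp (fun _ : ℕ => ℝ) p),
      |u s x - u s y| ≤ (∑' n, (dseq α (n + 1))⁻¹ ^ a) * K * ‖x - y‖ ^ a) ∧
    Equicontinuous (fun s : Set.Ioo (0 : ℝ) 1 => (u s : lp (fun _ : ℕ => ℝ) p → ℝ)) := by
  have hdpos : ∀ n, 0 < dseq α n := dseq_pos hc hα
  set D : ℝ := ∑' n, (dseq α (n + 1))⁻¹ ^ a with hD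
  -- differences pass through ι
  have hsub : ∀ (r : ℝ) (x y : lp (fun _ : ℕ => ℝ) p), ι r x - ι r y = ι 0 (x - y) := by
    intro r x y
    apply lp.ext
    funext k
    have h1 : ((ι r x - ι r y : lp (fun _ : ℕ => ℝ) p) : ∀ _ : ℕ, ℝ) k
        = (ι r x : ∀ _ : ℕ, ℝ) k - (ι r y : ∀ _ : ℕ, ℝ) k := by
      rw [lp.coeFn_sub]; rfl
    rw [h1, hι, hι, hι]
    rcases k with _ | k
    · simp
    · simp only [Nat.succ_ne_zero, if_false, Nat.add_sub_cancel]
      have h2 : ((x - y : lp (fun _ : ℕ => ℝ) p) : ∀ _ : ℕ, ℝ) k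
          = (x : ∀ _ : ℕ, ℝ) k - (y : ∀ _ : ℕ, ℝ) k := by
        rw [lp.coeFn_sub]; rfl
      rw [h2, sub_div]
  -- norms of iterates are symmetric in the difference
  have hnormneg : ∀ (n : ℕ) (x y : lp (fun _ : ℕ => ℝ) p),
      ‖(ι 0)^[n] (y - x)‖ = ‖(ι 0)^[n] (x - y)‖ := by
    intro n x y
    have hneg : (ι 0)^[n] (y - x) = -((ι 0)^[n] (x - y)) := by
      apply lp.ext
      funext k
      rw [lp.coeFn_neg, Pi.neg_apply, iter_apply hι, iter_apply hι]
      by_cases hk : k < n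
      · rw [if_pos hk, if_pos hk, neg_zero]
      · rw [if_neg hk, if_neg hk]
        have h3 : ((y - x : lp (fun _ : ℕ => ℝ) p) : ∀ _ : ℕ, ℝ) (k - n)
            = -(((x - y : lp (fun _ : ℕ => ℝ) p) : ∀ _ : ℕ, ℝ) (k - n)) := by
          rw [lp.coeFn_sub, lp.coeFn_sub, Pi.sub_apply, Pi.sub_apply]
          ring
        rw [h3, neg_div]
    rw [hneg, norm_neg]
  have key : ∀ (s : Set.Ioo (0 : ℝ) 1) (x y : lp (fun _ : ℕ => ℝ) p),
      |u s x - u s y| ≤ D * K * ‖x - y‖ ^ a := by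
    intro s x y
    obtain ⟨hs0, hs1⟩ := s.2
    set C : ℝ := 2 * ‖u s‖ with hC
    have hmain : ∀ (N : ℕ) (x y : lp (fun _ : ℕ => ℝ) p),
        |u s x - u s y| ≤
          K * (∑ n ∈ Finset.range N, (s : ℝ) ^ n * ‖(ι 0)^[n + 1] (x - y)‖ ^ a)
            + (s : ℝ) ^ N * C := by
      intro N
      induction N with
      | zero =>
        intro x y
        simp only [Finset.range_zero, Finset.sum_empty, mul_zero, pow_zero, one_mul, zero_add]
        rw [← Real.dist_eq]
        exact (u s).dist_le_two_norm x y
      | succ N ih =>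
        have hone : ∀ x y : lp (fun _ : ℕ => ℝ) p,
            u s x - u s y ≤
              K * (∑ n ∈ Finset.range (N + 1), (s : ℝ) ^ n * ‖(ι 0)^[n + 1] (x - y)‖ ^ a)
                + (s : ℝ) ^ (N + 1) * C := by
          intro x y
          have hid : (∑ n ∈ Finset.range (N + 1), (s : ℝ) ^ n * ‖(ι 0)^[n + 1] (x - y)‖ ^ a)
              = (s : ℝ) * (∑ n ∈ Finset.range N,
                  (s : ℝ) ^ n * ‖(ι 0)^[n + 1] (ι 0 (x - y))‖ ^ a)
                + ‖(ι 0)^[0 + 1] (x - y)‖ ^ a := by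
            rw [Finset.sum_range_succ', Finset.mul_sum]
            congr 1
            · refine Finset.sum_congr rfl fun i _ => ?_
              rw [Function.iterate_succ_apply]
              ring
            · rw [pow_zero, one_mul]
          have hstep : u s x ≤ u s y +
              (K * (∑ n ∈ Finset.range (N + 1), (s : ℝ) ^ n * ‖(ι 0)^[n + 1] (x - y)‖ ^ a)
                + (s : ℝ) ^ (N + 1) * C) := by
            refine exp_int_le (m := m)
              (fun r => A (ι r x) + (s : ℝ) * u s (ι r x))
              (fun r => A (ι r y) + (s : ℝ) * u s (ι r y))
              _ (u s x) (u s y) (hfix s x) (hfix s y) ?_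
            intro r
            have hd1 : ι r x - ι r y = ι 0 (x - y) := hsub r x y
            have hA' : A (ι r x) - A (ι r y) ≤ K * ‖(ι 0)^[0 + 1] (x - y)‖ ^ a := by
              have h4 := le_of_abs_le (hA (ι r x) (ι r y))
              rwa [hd1, ← Function.iterate_one (ι 0), ← zero_add 1] at h4
            have hu' : u s (ι r x) - u s (ι r y) ≤
                K * (∑ n ∈ Finset.range N, (s : ℝ) ^ n * ‖(ι 0)^[n + 1] (ι 0 (x - y))‖ ^ a)
                  + (s : ℝ) ^ N * C := by
              have h5 := le_of_abs_le (ih (ι r x) (ι r y))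
              rwa [hd1] at h5
            have hu'' : (s : ℝ) * (u s (ι r x) - u s (ι r y)) ≤
                (s : ℝ) * (K * (∑ n ∈ Finset.range N,
                    (s : ℝ) ^ n * ‖(ι 0)^[n + 1] (ι 0 (x - y))‖ ^ a)
                  + (s : ℝ) ^ N * C) :=
              mul_le_mul_of_nonneg_left hu' hs0.le
            have e1 : K * ((s : ℝ) * (∑ n ∈ Finset.range N,
                    (s : ℝ) ^ n * ‖(ι 0)^[n + 1] (ι 0 (x - y))‖ ^ a)
                  + ‖(ι 0)^[0 + 1] (x - y)‖ ^ a) + (s : ℝ) ^ (N + 1) * C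
                = K * ‖(ι 0)^[0 + 1] (x - y)‖ ^ a
                  + (s : ℝ) * (K * (∑ n ∈ Finset.range N,
                      (s : ℝ) ^ n * ‖(ι 0)^[n + 1] (ι 0 (x - y))‖ ^ a)
                    + (s : ℝ) ^ N * C) := by ring
            beta_reduce
            rw [hid]
            linarith [hA', hu'']
          linarith
        intro x y
        rw [abs_sub_le_iff]
        refine ⟨hone x y, ?_⟩
        have h6 := hone y x
        have hswap : ∀ n : ℕ, ‖(ι 0)^[n + 1] (y - x)‖ = ‖(ι 0)^[n + 1] (x - y)‖ :=
          fun n => hnormneg (n + 1) x y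
        simp only [hswap] at h6
        exact h6
    have hxa : (0 : ℝ) ≤ ‖x - y‖ ^ a := Real.rpow_nonneg (norm_nonneg _) _
    have hbound : ∀ N : ℕ, |u s x - u s y| ≤ D * K * ‖x - y‖ ^ a + (s : ℝ) ^ N * C := by
      intro N
      refine (hmain N x y).trans ?_
      have hterm : ∀ n ∈ Finset.range N, (s : ℝ) ^ n * ‖(ι 0)^[n + 1] (x - y)‖ ^ a
          ≤ (dseq α (n + 1))⁻¹ ^ a * ‖x - y‖ ^ a := by
        intro n _
        have h1 : ‖(ι 0)^[n + 1] (x - y)‖ ^ a ≤ ((dseq α (n + 1))⁻¹ * ‖x - y‖) ^ a :=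
          Real.rpow_le_rpow (norm_nonneg _) (iter_norm hp hc hα hι (n + 1) (x - y)) ha0.le
        have h2 : ((dseq α (n + 1))⁻¹ * ‖x - y‖) ^ a = (dseq α (n + 1))⁻¹ ^ a * ‖x - y‖ ^ a :=
          Real.mul_rpow (inv_nonneg.2 (hdpos _).le) (norm_nonneg _)
        calc (s : ℝ) ^ n * ‖(ι 0)^[n + 1] (x - y)‖ ^ a
            ≤ 1 * (((dseq α (n + 1))⁻¹ * ‖x - y‖) ^ a) :=
              mul_le_mul (pow_le_one₀ hs0.le hs1.le) h1
                (Real.rpow_nonneg (norm_nonneg _) _) zero_le_one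
          _ = (dseq α (n + 1))⁻¹ ^ a * ‖x - y‖ ^ a := by rw [one_mul, h2]
      have hsum : ∑ n ∈ Finset.range N, (s : ℝ) ^ n * ‖(ι 0)^[n + 1] (x - y)‖ ^ a
          ≤ (∑ n ∈ Finset.range N, (dseq α (n + 1))⁻¹ ^ a) * ‖x - y‖ ^ a := by
        rw [Finset.sum_mul]
        exact Finset.sum_le_sum hterm
      have hsum3 : (∑ n ∈ Finset.range N, (dseq α (n + 1))⁻¹ ^ a) ≤ D :=
        Summable.sum_le_tsum _ (fun n _ => Real.rpow_nonneg (inv_nonneg.2 (hdpos _).le) _) hd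
      have h7 : K * (∑ n ∈ Finset.range N, (s : ℝ) ^ n * ‖(ι 0)^[n + 1] (x - y)‖ ^ a)
          ≤ D * K * ‖x - y‖ ^ a := by
        calc K * (∑ n ∈ Finset.range N, (s : ℝ) ^ n * ‖(ι 0)^[n + 1] (x - y)‖ ^ a)
            ≤ K * (D * ‖x - y‖ ^ a) := by
              refine mul_le_mul_of_nonneg_left (hsum.trans ?_) hK
              exact mul_le_mul_of_nonneg_right hsum3 hxa
          _ = D * K * ‖x - y‖ ^ a := by ring
      linarith
    have hlim : Filter.Tendsto (fun N : ℕ => D * K * ‖x - y‖ ^ a + (s : ℝ) ^ N * C)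
        Filter.atTop (nhds (D * K * ‖x - y‖ ^ a)) := by
      have h0 : Filter.Tendsto (fun N : ℕ => (s : ℝ) ^ N) Filter.atTop (nhds 0) :=
        tendsto_pow_atTop_nhds_zero_of_lt_one hs0.le hs1
      have h8 := (h0.mul_const C).const_add (D * K * ‖x - y‖ ^ a)
      simpa using h8
    exact ge_of_tendsto' hlim hbound
  refine ⟨key, ?_⟩
  have hb : Filter.Tendsto (fun t : ℝ => D * K * |t| ^ a) (nhds 0) (nhds 0) := by
    have h1 : ContinuousAt (fun x : ℝ => x ^ a) 0 :=
      Real.continuousAt_rpow_const 0 a (Or.inr ha0.le)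
    have h2 : Filter.Tendsto (fun t : ℝ => |t|) (nhds (0 : ℝ)) (nhds (0 : ℝ)) := by
      have h2' := continuous_abs.tendsto (0 : ℝ)
      rwa [abs_zero] at h2'
    have h3 : Filter.Tendsto (fun t : ℝ => |t| ^ a) (nhds 0) (nhds 0) := by
      have h4 := h1.tendsto.comp h2
      simpa [Real.zero_rpow ha0.ne', Function.comp_def] using h4
    have h5 := h3.const_mul (D * K)
    simpa using h5
  refine Metric.equicontinuous_of_continuity_modulus (fun t => D * K * |t| ^ a) hb _ fun x y s => ?_
  rw [Real.dist_eq, dist_eq_norm]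
  calc |u s x - u s y| ≤ D * K * ‖x - y‖ ^ a := key s x y
    _ = D * K * |‖x - y‖| ^ a := by rw [abs_of_nonneg (norm_nonneg _)]
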